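/- For any finite non-empty subsets A and B of an abelian group, |A + B| ≥ |A|²|B|² / √(T(A)·T(B)), where T(X) = |{(x₁,x₂,x₃,x₄) ∈ X⁴ : x₁ + x₂ = x₃ + x₄}| counts additive quadruples. -/

import Mathlib

open Finset Pointwise

/-- The number of additive quadruples of `X`: tuples `(x₁,x₂,x₃,x₄) ∈ X⁴`
with `x₁ + x₂ = x₃ + x₄`. -/
def addQuadruples {G : Type*} [AddCommGroup G] [DecidableEq G] (X : Finset G) : ℕ :=
  (((X ×ˢ X) ×ˢ (X ×ˢ X)).filter fun p => p.1.1 + p.1.2 = p.2.1 + p.2.2).card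

open scoped Combinatorics.Additive

namespace Stmt10Aux

variable {G : Type*} [AddCommGroup G] [DecidableEq G]

/-- Number of representations of `d` as a difference of two elements of `X`. -/
def cnt (X : Finset G) (d : G) : ℕ := ((X ×ˢ X).filter fun p => p.1 - p.2 = d).card

lemma cnt_swap (X : Finset G) (d : G) :
    ((X ×ˢ X).filter fun p => p.2 - p.1 = d).card = cnt X d := by
  unfold cnt
  apply Finset.card_equiv (Equiv.prodComm G G)
  intro p
  simp [and_comm]

lemma cnt_ne_zero {X : Finset G} {d : G} (h : cnt X d ≠ 0) : d ∈ X - X := by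
  rw [cnt, Finset.card_ne_zero] at h
  obtain ⟨p, hp⟩ := h
  simp only [Finset.mem_filter, Finset.mem_product] at hp
  exact hp.2 ▸ Finset.sub_mem_sub hp.1.1 hp.1.2

lemma energy_eq_sum (s t : Finset G) :
    E[s, t] = ∑ d ∈ s - s, cnt s d * cnt t d := by
  rw [Finset.addEnergy,
    Finset.card_eq_sum_card_fiberwise (f := fun x => x.1.1 - x.1.2) (t := s - s)
      (by
        intro x hx
        simp only [Finset.mem_coe, Finset.mem_filter, Finset.mem_product] at hx
        exact Finset.sub_mem_sub hx.1.1.1 hx.1.1.2)]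
  refine Finset.sum_congr rfl fun d _ => ?_
  rw [Finset.filter_filter]
  have hpred : ∀ x ∈ (s ×ˢ s) ×ˢ t ×ˢ t,
      ((x.1.1 + x.2.1 = x.1.2 + x.2.2 ∧ x.1.1 - x.1.2 = d) ↔
        (x.1.1 - x.1.2 = d ∧ x.2.2 - x.2.1 = d)) := by
    rintro ⟨⟨a₁, a₂⟩, b₁, b₂⟩ _
    simp only
    constructor
    · rintro ⟨h1, h2⟩
      refine ⟨h2, ?_⟩
      rw [← h2, sub_eq_sub_iff_add_eq_add, add_comm]
      exact h1.symm
    · rintro ⟨h1, h2⟩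
      refine ⟨?_, h1⟩
      have h3 := h1.trans h2.symm
      rw [sub_eq_sub_iff_add_eq_add] at h3
      rw [h3, add_comm]
  rw [Finset.filter_congr hpred]
  rw [Finset.filter_product (p := fun p : G × G => p.1 - p.2 = d)
      (q := fun p : G × G => p.2 - p.1 = d), Finset.card_product, cnt_swap]
  rfl

lemma energy_sq_le (s t : Finset G) : E[s, t] ^ 2 ≤ E[s, s] * E[t, t] := by
  rw [energy_eq_sum s t]
  calc (∑ d ∈ s - s, cnt s d * cnt t d) ^ 2
      ≤ (∑ d ∈ s - s, cnt s d ^ 2) * (∑ d ∈ s - s, cnt t d ^ 2) :=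
        Finset.sum_mul_sq_le_sq_mul_sq (R := ℕ) _ _ _
    _ ≤ E[s, s] * E[t, t] := by
        refine Nat.mul_le_mul ?_ ?_
        · rw [energy_eq_sum s s]
          exact le_of_eq (Finset.sum_congr rfl fun d _ => sq _)
        · rw [energy_eq_sum t t]
          refine (Finset.sum_le_sum_of_ne_zero ?_).trans
            (le_of_eq (Finset.sum_congr rfl fun d _ => sq _))
          intro d _ hd
          exact cnt_ne_zero (by simpa [pow_eq_zero_iff] using hd)

lemma addQuadruples_eq (X : Finset G) : addQuadruples X = E[X, X] := by
  rw [addQuadruples, Finset.addEnergy]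
  apply Finset.card_equiv (Equiv.prodProdProdComm G G G G)
  rintro ⟨⟨a, b⟩, c, d⟩
  simp only [Finset.mem_filter, Finset.mem_product, Equiv.prodProdProdComm_apply]
  tauto

end Stmt10Aux

theorem stmt10 {G : Type*} [AddCommGroup G] [DecidableEq G]
    (A B : Finset G) (hA : A.Nonempty) (hB : B.Nonempty) :
    (A.card : ℝ) ^ 2 * (B.card : ℝ) ^ 2
        / Real.sqrt ((addQuadruples A : ℝ) * (addQuadruples B : ℝ))
      ≤ ((A + B).card : ℝ) := by
  open Stmt10Aux in
  have hqA : addQuadruples A = E[A, A] := addQuadruples_eq A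
  have hqB : addQuadruples B = E[B, B] := addQuadruples_eq B
  have hepos : 0 < E[A, B] := Finset.addEnergy_pos hA hB
  have h1 : (A.card : ℝ) ^ 2 * (B.card : ℝ) ^ 2 ≤ ((A + B).card : ℝ) * (E[A, B] : ℝ) := by
    have := Finset.le_card_add_mul_addEnergy A B
    exact_mod_cast this
  have h2 : (E[A, B] : ℝ) ≤ Real.sqrt ((addQuadruples A : ℝ) * (addQuadruples B : ℝ)) := by
    rw [Real.le_sqrt (by positivity)]
    rw [hqA, hqB]
    · exact_mod_cast Stmt10Aux.energy_sq_le A B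
    · positivity
  have hsq : 0 < Real.sqrt ((addQuadruples A : ℝ) * (addQuadruples B : ℝ)) :=
    lt_of_lt_of_le (by exact_mod_cast hepos) h2
  rw [div_le_iff₀ hsq]
  calc (A.card : ℝ) ^ 2 * (B.card : ℝ) ^ 2 ≤ ((A + B).card : ℝ) * (E[A, B] : ℝ) := h1
    _ ≤ ((A + B).card : ℝ) * Real.sqrt ((addQuadruples A : ℝ) * (addQuadruples B : ℝ)) := by
        exact mul_le_mul_of_nonneg_left h2 (by positivity)
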